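/- Let X be a set, let F̃(X) be the free left R-module on X realized as finitely supported functions from X to R, equipped with the operators 𝔭̃_ω(Σ r_x x) = Σ P_ω(r_x) x, and let j_X : X → F̃(X) send x to the basis element 1_R·x. Then (F̃(X),𝔭̃_Ω) is the restricted free left (R,P_Ω)-module on X: for every left (R,P_Ω)-module (M,𝔪_Ω) and every set map φ : X → M whose image is contained in MC(M), there exists a unique left (R,P_Ω)-module homomorphism φ̄ : F̃(X) → M with φ̄ ∘ j_X = φ. -/
import Mathlib


/-- The free left `R`-module `F̃(X) = X →₀ R` with the operators
`𝔭̃_ω (Σ r_x x) = Σ P_ω(r_x) x` and `j_X : x ↦ 1_R · x` is the restricted free left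
`(R, P_Ω)`-module on `X`: every set map `φ : X → M` into a left `(R, P_Ω)`-module whose
image consists of module constants extends uniquely to a left `(R, P_Ω)`-module
homomorphism `F̃(X) → M`. -/
theorem restricted_free_multiple_rota_baxter_module
    (k : Type*) [CommRing k]
    (R : Type*) [Ring R] [Algebra k R]
    (Ω : Type*) [Nonempty Ω]
    (lam : Ω → k)
    (P : Ω → R →ₗ[k] R)
    (hP : ∀ (α β : Ω) (r₁ r₂ : R),
      P α r₁ * P β r₂ =
        P α (r₁ * P β r₂) + P β (P α r₁ * r₂)
          + lam β • P α (r₁ * r₂) + lam α • P β (r₁ * r₂))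
    (X : Type*)
    (pt : Ω → (X →₀ R) →ₗ[k] (X →₀ R))
    (hpt : ∀ (ω : Ω) (u : X →₀ R) (x : X), pt ω u x = P ω (u x))
    (M : Type*) [AddCommGroup M] [Module k M] [Module R M] [IsScalarTower k R M]
    (mOp : Ω → M →ₗ[k] M)
    (hM : ∀ (α β : Ω) (x : R) (m : M),
      P α x • mOp β m =
        mOp α (x • mOp β m) + mOp β (P α x • m)
          + lam β • mOp α (x • m) + lam α • mOp β (x • m))
    (φ : X → M)
    (hφ : ∀ (x : X) (r : R) (ω : Ω), mOp ω (r • φ x) = P ω r • φ x) :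
    ∃! φbar : (X →₀ R) →ₗ[R] M,
      (∀ (ω : Ω) (u : X →₀ R), φbar (pt ω u) = mOp ω (φbar u)) ∧
      ∀ x : X, φbar (Finsupp.single x 1) = φ x := by
  have hptsingle : ∀ (ω : Ω) (x : X) (r : R),
      pt ω (Finsupp.single x r) = Finsupp.single x (P ω r) := by
    intro ω x r
    ext y
    rw [hpt]
    by_cases h : y = x
    · subst h; simp
    · simp [Finsupp.single_apply, Ne.symm h]
  refine ⟨Finsupp.linearCombination R φ, ⟨?_, ?_⟩, ?_⟩
  · intro ω u
    have : ((Finsupp.linearCombination R φ).restrictScalars k).comp (pt ω)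
        = (mOp ω).comp ((Finsupp.linearCombination R φ).restrictScalars k) := by
      apply Finsupp.lhom_ext
      intro a b
      simp [hptsingle, Finsupp.linearCombination_single, hφ]
    exact congrArg (· u) this
  · intro x
    simp [Finsupp.linearCombination_single]
  · rintro ψ ⟨-, h2⟩
    apply Finsupp.lhom_ext'
    intro x
    apply LinearMap.ext_ring
    simp [h2, Finsupp.linearCombination_single]
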